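/- Every element of GL_n(F) can be written uniquely in the form r·b with r ∈ R = ⋃_{w ∈ S_n} R_w and b ∈ B. -/

import Mathlib

open Matrix

variable (p : ℕ) [Fact p.Prime] (F : Type) [Field F] [Algebra ℚ_[p] F]
  [FiniteDimensional ℚ_[p] F] [Algebra ℤ_[p] F] [IsScalarTower ℤ_[p] ℚ_[p] F]

/-- The ring of integers `o_F` of the finite extension `F` of `ℚ_p`. -/
def oF : Set F := {x | x ∈ integralClosure ℤ_[p] F}

/-- The ideal `π_F o_F` of `o_F`, as a subset of `F`. -/
def piO (π : F) : Set F := {x | ∃ c ∈ oF p F, x = π * c}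

/-- The permutation matrix of `w`, with `w_{ij} = 1` iff `w(j) = i`. -/
def permMat (n : ℕ) (w : Equiv.Perm (Fin n)) : Matrix (Fin n) (Fin n) F :=
  fun i j => if w j = i then 1 else 0

/-- `R_w`: the set of matrices `(a_{ij})` with `a_{ij} = 1` if `w⁻¹(i) = j`,
`a_{ij} = 0` if `w⁻¹(i) < j`, `a_{ij} ∈ o_F` if `w⁻¹(i) > j` and `w(j) > i`, and
`a_{ij} ∈ π_F o_F` if `w⁻¹(i) > j` and `w(j) < i`. -/
def Rw (π : F) (n : ℕ) (w : Equiv.Perm (Fin n)) : Set (Matrix (Fin n) (Fin n) F) :=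
  {a | ∀ i j : Fin n,
    (w⁻¹ i = j → a i j = 1) ∧
    (w⁻¹ i < j → a i j = 0) ∧
    (j < w⁻¹ i → i < w j → a i j ∈ oF p F) ∧
    (j < w⁻¹ i → w j < i → a i j ∈ piO p F π)}

/-- invertible upper triangular matrix (an element of the Borel `B`). -/
def IsBorel {n : ℕ} (b : Matrix (Fin n) (Fin n) F) : Prop :=
  (∀ i j : Fin n, j < i → b i j = 0) ∧ (∀ i : Fin n, b i i ≠ 0)

set_option linter.unusedSectionVars false
set_option maxHeartbeats 1000000

section Basic
variable {π : F}

theorem oF_zero : (0 : F) ∈ oF p F := (integralClosure ℤ_[p] F).zero_mem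
theorem oF_one : (1 : F) ∈ oF p F := (integralClosure ℤ_[p] F).one_mem
variable {p F} in
theorem oF_mul {x y : F} (hx : x ∈ oF p F) (hy : y ∈ oF p F) : x * y ∈ oF p F :=
  (integralClosure ℤ_[p] F).mul_mem hx hy
variable {p F} in
theorem oF_pow {x : F} (hx : x ∈ oF p F) (k : ℕ) : x ^ k ∈ oF p F :=
  (integralClosure ℤ_[p] F).pow_mem hx k

theorem piO_zero : (0 : F) ∈ piO p F π := ⟨0, oF_zero p F, by ring⟩

variable {p F} in
theorem piO_mul_oF {x y : F} (hx : x ∈ piO p F π) (hy : y ∈ oF p F) : x * y ∈ piO p F π := by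
  obtain ⟨c, hc, rfl⟩ := hx
  exact ⟨c * y, oF_mul hc hy, by ring⟩

variable {p F} in
theorem oF_mul_piO {x y : F} (hx : x ∈ oF p F) (hy : y ∈ piO p F π) : x * y ∈ piO p F π := by
  rw [mul_comm]; exact piO_mul_oF hy hx

theorem pinv_not_int : ((p : F))⁻¹ ∉ oF p F := by
  intro h
  have hcast : ((p : F)) = algebraMap ℚ_[p] F ((p : ℚ_[p])) := by simp
  have h2 : IsIntegral ℤ_[p] (algebraMap ℚ_[p] F ((p : ℚ_[p]))⁻¹) := by
    rwa [map_inv₀, ← hcast]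
  have hinj : Function.Injective (algebraMap ℚ_[p] F) := (algebraMap ℚ_[p] F).injective
  have h3 : IsIntegral ℤ_[p] ((p : ℚ_[p]))⁻¹ := by
    rwa [isIntegral_algebraMap_iff hinj] at h2
  obtain ⟨z, hz⟩ := IsIntegrallyClosed.isIntegral_iff.mp h3
  have hn : ‖(z : ℚ_[p])‖ ≤ 1 := z.2
  rw [show (algebraMap ℤ_[p] ℚ_[p]) z = (z : ℚ_[p]) from rfl] at hz
  rw [hz, norm_inv, Padic.norm_p, inv_inv] at hn
  have hp2 : (2 : ℝ) ≤ (p : ℝ) := by exact_mod_cast (Fact.out : p.Prime).two_le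
  linarith

variable {p F}

theorem pF_ne_zero : ((p : F)) ≠ 0 := by
  have : CharZero F := charZero_of_injective_algebraMap (algebraMap ℚ_[p] F).injective
  exact_mod_cast (Fact.out : p.Prime).ne_zero

section Unif
variable (hπ : π ∈ oF p F)
  (hunif : ∀ x : F, x ≠ 0 → ∃ (m : ℤ) (u : F), u ∈ oF p F ∧ u⁻¹ ∈ oF p F ∧ x = u * π ^ m)
include hπ hunif

theorem pi_ne_zero : π ≠ 0 := by
  rintro rfl
  obtain ⟨m, u, hu, hui, hx⟩ := hunif (p : F) (pF_ne_zero)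
  rcases eq_or_ne m 0 with rfl | hm
  · rw [zpow_zero, mul_one] at hx
    exact pinv_not_int p F (hx ▸ hui)
  · rw [_root_.zero_zpow m hm, mul_zero] at hx
    exact pF_ne_zero hx

theorem pi_inv_not : π⁻¹ ∉ oF p F := by
  intro h
  obtain ⟨m, u, hu, hui, hx⟩ := hunif (p : F) (pF_ne_zero)
  apply pinv_not_int p F
  have hπ0 := pi_ne_zero hπ hunif
  have : ((p : F))⁻¹ = u⁻¹ * π ^ (-m) := by
    rw [hx]; rw [mul_inv, _root_.zpow_neg]
  rw [this]
  apply oF_mul hui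
  rcases le_or_gt 0 (-m) with hm | hm
  · rw [show -m = ((-m).toNat : ℤ) by omega, zpow_natCast]
    exact oF_pow hπ _
  · rw [show -m = -(((m).toNat : ℤ)) by omega, _root_.zpow_neg, zpow_natCast, ← inv_pow]
    exact oF_pow h _

theorem one_not_piO : (1 : F) ∉ piO p F π := by
  rintro ⟨c, hc, h1⟩
  apply pi_inv_not hπ hunif
  have hπ0 := pi_ne_zero hπ hunif
  have : π⁻¹ = c := by field_simp; exact h1
  rwa [this]

end Unif
end Basic

section Val
variable {p : ℕ} [Fact p.Prime] {F : Type} [Field F] [Algebra ℚ_[p] F]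
  [FiniteDimensional ℚ_[p] F] [Algebra ℤ_[p] F] [IsScalarTower ℤ_[p] ℚ_[p] F]
variable {π : F} (hπ : π ∈ oF p F)
  (hunif : ∀ x : F, x ≠ 0 → ∃ (m : ℤ) (u : F), u ∈ oF p F ∧ u⁻¹ ∈ oF p F ∧ x = u * π ^ m)

open scoped Classical in
/-- the valuation of `x` w.r.t. `π`, extracted by choice from `hunif`. -/
noncomputable def vv (x : F) : ℤ :=
  if h : x ≠ 0 then (hunif x h).choose else 0

include hπ hunif

theorem vv_spec {x : F} (hx : x ≠ 0) :
    ∃ u : F, u ∈ oF p F ∧ u⁻¹ ∈ oF p F ∧ x = u * π ^ (vv hunif x) := by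
  rw [vv, dif_pos hx]
  exact (hunif x hx).choose_spec

theorem ratio_oF {ux uy : F} {a b : ℤ} (hux : ux ∈ oF p F) (huxi : ux⁻¹ ∈ oF p F)
    (huy : uy ∈ oF p F) (hab : a ≤ b) :
    (uy * π ^ b) * (ux * π ^ a)⁻¹ ∈ oF p F := by
  have hπ0 : π ≠ 0 := pi_ne_zero hπ hunif
  have key : (uy * π ^ b) * (ux * π ^ a)⁻¹ = uy * ux⁻¹ * π ^ ((b - a).toNat) := by
    rw [← zpow_natCast π, Int.toNat_of_nonneg (by omega)]
    rw [mul_inv, mul_mul_mul_comm, ← _root_.zpow_neg, ← zpow_add₀ hπ0]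
    ring_nf
  rw [key]
  exact oF_mul (oF_mul huy huxi) (oF_pow hπ _)

theorem ratio_piO {ux uy : F} {a b : ℤ} (hux : ux ∈ oF p F) (huxi : ux⁻¹ ∈ oF p F)
    (huy : uy ∈ oF p F) (hab : a < b) :
    (uy * π ^ b) * (ux * π ^ a)⁻¹ ∈ piO p F π := by
  have hπ0 : π ≠ 0 := pi_ne_zero hπ hunif
  refine ⟨uy * ux⁻¹ * π ^ ((b - a - 1).toNat), oF_mul (oF_mul huy huxi) (oF_pow hπ _), ?_⟩
  rw [← zpow_natCast π, Int.toNat_of_nonneg (by omega)]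
  rw [mul_inv, mul_mul_mul_comm, ← _root_.zpow_neg, ← zpow_add₀ hπ0]
  have h1 : π ^ (b + -a) = π ^ (b - a - 1) * π ^ (1:ℤ) := by
    rw [← zpow_add₀ hπ0]; ring_nf
  rw [h1, zpow_one]; ring

theorem pivot {m : ℕ} (col : Fin m → F) (hne : ∃ i, col i ≠ 0) :
    ∃ i0, col i0 ≠ 0 ∧ (∀ i, col i * (col i0)⁻¹ ∈ oF p F) ∧
      (∀ i, i0 < i → col i * (col i0)⁻¹ ∈ piO p F π) := by
  classical
  set S : Finset (Fin m) := Finset.univ.filter (fun i => col i ≠ 0) with hS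
  have hSne : S.Nonempty := by
    obtain ⟨i, hi⟩ := hne; exact ⟨i, by simp [hS, hi]⟩
  set μ := S.inf' hSne (fun i => vv hunif (col i)) with hμ
  set T : Finset (Fin m) := S.filter (fun i => vv hunif (col i) = μ) with hT
  have hTne : T.Nonempty := by
    obtain ⟨i, hi, hie⟩ := Finset.exists_mem_eq_inf' hSne (fun i => vv hunif (col i))
    exact ⟨i, by simp only [hT, Finset.mem_filter]; exact ⟨hi, hie.symm⟩⟩
  set i0 := T.max' hTne with hi0
  have hi0T : i0 ∈ T := T.max'_mem hTne
  have hi0S : i0 ∈ S := Finset.mem_of_mem_filter _ hi0T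
  have hi0ne : col i0 ≠ 0 := by
    have := hi0S; rw [hS, Finset.mem_filter] at this; exact this.2
  have hi0v : vv hunif (col i0) = μ := by
    have := hi0T; rw [hT, Finset.mem_filter] at this; exact this.2
  obtain ⟨u0, hu0, hu0i, h0e⟩ := vv_spec hπ hunif hi0ne
  refine ⟨i0, hi0ne, ?_, ?_⟩
  · intro i
    by_cases hi : col i = 0
    · rw [hi, zero_mul]; exact oF_zero p F
    · have hiS : i ∈ S := by rw [hS, Finset.mem_filter]; exact ⟨Finset.mem_univ _, hi⟩
      have hle : μ ≤ vv hunif (col i) := Finset.inf'_le _ hiS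
      obtain ⟨u, hu, hui, he⟩ := vv_spec hπ hunif hi
      rw [he, h0e]
      exact ratio_oF hπ hunif hu0 hu0i hu (by omega)
  · intro i hlt
    by_cases hi : col i = 0
    · rw [hi, zero_mul]; exact piO_zero p F
    · have hiS : i ∈ S := by rw [hS, Finset.mem_filter]; exact ⟨Finset.mem_univ _, hi⟩
      have hle : μ ≤ vv hunif (col i) := Finset.inf'_le _ hiS
      have hne' : vv hunif (col i) ≠ μ := by
        intro he
        have hiT : i ∈ T := by rw [hT, Finset.mem_filter]; exact ⟨hiS, he⟩
        exact absurd (T.le_max' i hiT) (by rw [← hi0]; exact not_le.mpr hlt)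
      obtain ⟨u, hu, hui, he⟩ := vv_spec hπ hunif hi
      rw [he, h0e]
      exact ratio_piO hπ hunif hu0 hu0i hu (by omega)

end Val

section Perm
open Equiv

/-- assemble a permutation of `Fin (n+1)` sending `0 ↦ i0` and `j.succ ↦ i0.succAbove (v j)`. -/
def pasm {n : ℕ} (i0 : Fin (n + 1)) (v : Equiv.Perm (Fin n)) : Equiv.Perm (Fin (n + 1)) :=
  (finSuccEquiv' 0).trans ((Equiv.optionCongr v).trans (finSuccEquiv' i0).symm)

theorem pasm_zero {n : ℕ} (i0 : Fin (n + 1)) (v : Equiv.Perm (Fin n)) : pasm i0 v 0 = i0 := by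
  simp [pasm, finSuccEquiv'_at]

theorem pasm_succ {n : ℕ} (i0 : Fin (n + 1)) (v : Equiv.Perm (Fin n)) (j : Fin n) :
    pasm i0 v j.succ = i0.succAbove (v j) := by
  have h : finSuccEquiv' (0 : Fin (n + 1)) j.succ = some j := by
    rw [← Fin.succAbove_zero, finSuccEquiv'_succAbove]
  simp [pasm, h]

theorem pasm_inv_i0 {n : ℕ} (i0 : Fin (n + 1)) (v : Equiv.Perm (Fin n)) :
    (pasm i0 v)⁻¹ i0 = 0 := by
  have h : (pasm i0 v)⁻¹ (pasm i0 v 0) = 0 := Equiv.symm_apply_apply (pasm i0 v) 0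
  rwa [pasm_zero] at h

theorem pasm_inv_succAbove {n : ℕ} (i0 : Fin (n + 1)) (v : Equiv.Perm (Fin n)) (k : Fin n) :
    (pasm i0 v)⁻¹ (i0.succAbove k) = (v⁻¹ k).succ := by
  have : i0.succAbove k = pasm i0 v ((v⁻¹ k).succ) := by
    rw [pasm_succ, Equiv.Perm.coe_inv, Equiv.apply_symm_apply]
  rw [this, Equiv.Perm.coe_inv, Equiv.symm_apply_apply]

theorem exists_pasm {n : ℕ} (w : Equiv.Perm (Fin (n + 1))) : ∃ v, w = pasm (w 0) v := by
  classical
  set e : Option (Fin n) ≃ Option (Fin n) :=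
    (finSuccEquiv' (0 : Fin (n+1))).symm.trans (w.trans (finSuccEquiv' (w 0))) with he
  refine ⟨Equiv.removeNone e, ?_⟩
  apply Equiv.ext
  intro i
  refine Fin.cases ?_ ?_ i
  · rw [pasm_zero]
  · intro j
    rw [pasm_succ]
    have hne : w j.succ ≠ w 0 := fun h => Fin.succ_ne_zero j (w.injective h)
    obtain ⟨k, hk⟩ := Fin.exists_succAbove_eq hne
    have hesome : e (some j) = some k := by
      rw [he]
      simp only [Equiv.trans_apply]
      rw [show (finSuccEquiv' (0 : Fin (n+1))).symm (some j) = j.succ by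
        rw [finSuccEquiv'_symm_some, Fin.succAbove_zero]]
      rw [← hk, finSuccEquiv'_succAbove]
    have := Equiv.removeNone_some e ⟨k, hesome⟩
    rw [hesome] at this
    have hkk : Equiv.removeNone e j = k := by
      exact Option.some_injective _ this
    rw [hkk, hk]

end Perm

/-- assembled matrix: column 0 is `c`, row `i0` is `(1, 0, …, 0)` (given `c i0 = 1`),
and the rest is `rt`. -/
def masm {n : ℕ} (i0 : Fin (n + 1)) (c : Fin (n + 1) → F)
    (rt : Matrix (Fin n) (Fin n) F) : Matrix (Fin (n + 1)) (Fin (n + 1)) F :=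
  fun i j => Fin.cases (c i) (fun j' => Option.elim (finSuccEquiv' i0 i) 0 (fun k => rt k j')) j

section masm
variable {F} {n : ℕ} (i0 : Fin (n + 1)) (c : Fin (n + 1) → F) (rt : Matrix (Fin n) (Fin n) F)

theorem masm_zero (i : Fin (n + 1)) : masm F i0 c rt i 0 = c i := rfl

theorem masm_succ_self (j : Fin n) : masm F i0 c rt i0 j.succ = 0 := by
  simp [masm, finSuccEquiv'_at]

theorem masm_succ_sa (k : Fin n) (j : Fin n) :
    masm F i0 c rt (i0.succAbove k) j.succ = rt k j := by
  simp [masm, finSuccEquiv'_succAbove]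

end masm

section RwAsm
variable {p F} {π : F} {n : ℕ} {i0 : Fin (n + 1)} {v : Equiv.Perm (Fin n)}

theorem Rw_pasm {rt : Matrix (Fin n) (Fin n) F} (hrt : rt ∈ Rw p F π n v)
    {c : Fin (n + 1) → F} (hc0 : c i0 = 1)
    (hcO : ∀ i, i < i0 → c i ∈ oF p F) (hcP : ∀ i, i0 < i → c i ∈ piO p F π) :
    masm F i0 c rt ∈ Rw p F π (n + 1) (pasm i0 v) := by
  intro i j
  refine Fin.cases ?_ ?_ j
  · by_cases hi : i = i0
    · subst hi
      refine ⟨fun _ => by rw [masm_zero, hc0], ?_, ?_, ?_⟩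
      · rw [pasm_inv_i0]; exact fun h => absurd h (Fin.not_lt_zero _)
      · rw [pasm_inv_i0]; exact fun h => absurd h (lt_irrefl _)
      · rw [pasm_inv_i0]; exact fun h => absurd h (lt_irrefl _)
    · obtain ⟨k, rfl⟩ := Fin.exists_succAbove_eq hi
      rw [pasm_inv_succAbove, pasm_zero, masm_zero]
      refine ⟨fun h => absurd h (Fin.succ_ne_zero _), fun h => absurd h (Fin.not_lt_zero _),
        fun _ h2 => hcO _ h2, fun _ h2 => hcP _ h2⟩
  · intro j'
    by_cases hi : i = i0
    · subst hi
      rw [pasm_inv_i0, masm_succ_self]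
      refine ⟨fun h => absurd h.symm (Fin.succ_ne_zero _), fun _ => rfl,
        fun h => absurd h (Fin.not_lt_zero _), fun h => absurd h (Fin.not_lt_zero _)⟩
    · obtain ⟨k, rfl⟩ := Fin.exists_succAbove_eq hi
      rw [pasm_inv_succAbove, pasm_succ, masm_succ_sa]
      obtain ⟨h1, h2, h3, h4⟩ := hrt k j'
      refine ⟨fun h => h1 (by rwa [Fin.succ_inj] at h),
        fun h => h2 (by rwa [Fin.succ_lt_succ_iff] at h),
        fun ha hb => h3 (by rwa [Fin.succ_lt_succ_iff] at ha)
          (by rwa [Fin.succAbove_lt_succAbove_iff] at hb),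
        fun ha hb => h4 (by rwa [Fin.succ_lt_succ_iff] at ha)
          (by rwa [Fin.succAbove_lt_succAbove_iff] at hb)⟩

theorem Rw_restrict {r : Matrix (Fin (n + 1)) (Fin (n + 1)) F}
    (hr : r ∈ Rw p F π (n + 1) (pasm i0 v)) :
    (fun k j => r (i0.succAbove k) j.succ) ∈ Rw p F π n v := by
  intro k j
  obtain ⟨h1, h2, h3, h4⟩ := hr (i0.succAbove k) j.succ
  rw [pasm_inv_succAbove] at h1 h2 h3 h4
  rw [pasm_succ] at h3 h4
  refine ⟨fun h => h1 (by rw [h]), fun h => h2 (by rwa [Fin.succ_lt_succ_iff]),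
    fun ha hb => h3 (by rwa [Fin.succ_lt_succ_iff]) (by rwa [Fin.succAbove_lt_succAbove_iff]),
    fun ha hb => h4 (by rwa [Fin.succ_lt_succ_iff]) (by rwa [Fin.succAbove_lt_succAbove_iff])⟩

end RwAsm

section Borel
variable {F} {n : ℕ}

theorem isBorel_bt {b : Matrix (Fin n) (Fin n) F} (h : IsBorel F b) :
    b.BlockTriangular id := fun i j hij => h.1 i j hij

theorem isBorel_det_ne_zero {b : Matrix (Fin n) (Fin n) F} (h : IsBorel F b) : b.det ≠ 0 := by
  rw [Matrix.det_of_upperTriangular (isBorel_bt h)]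
  exact Finset.prod_ne_zero_iff.mpr fun i _ => h.2 i

theorem isBorel_of_bt {c : Matrix (Fin n) (Fin n) F} (hbt : c.BlockTriangular id)
    (hdet : c.det ≠ 0) : IsBorel F c := by
  refine ⟨fun i j h => hbt h, fun i hi => ?_⟩
  rw [Matrix.det_of_upperTriangular hbt] at hdet
  exact hdet (Finset.prod_eq_zero (Finset.mem_univ i) hi)

theorem isBorel_mul {b b' : Matrix (Fin n) (Fin n) F} (hb : IsBorel F b) (hb' : IsBorel F b') :
    IsBorel F (b * b') :=
  isBorel_of_bt ((isBorel_bt hb).mul (isBorel_bt hb'))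
    (by rw [Matrix.det_mul]; exact mul_ne_zero (isBorel_det_ne_zero hb) (isBorel_det_ne_zero hb'))

theorem isBorel_inv {b : Matrix (Fin n) (Fin n) F} (hb : IsBorel F b) : IsBorel F b⁻¹ := by
  have hdet : IsUnit b.det := isUnit_iff_ne_zero.mpr (isBorel_det_ne_zero hb)
  have : Invertible b := b.invertibleOfIsUnitDet hdet
  refine isBorel_of_bt (Matrix.blockTriangular_inv_of_blockTriangular (isBorel_bt hb)) ?_
  rw [Matrix.det_nonsing_inv, Ring.inverse_eq_inv]
  exact inv_ne_zero (isBorel_det_ne_zero hb)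

end Borel

section Exist
variable {p F} {π : F} (hπ : π ∈ oF p F)
  (hunif : ∀ x : F, x ≠ 0 → ∃ (m : ℤ) (u : F), u ∈ oF p F ∧ u⁻¹ ∈ oF p F ∧ x = u * π ^ m)

include hπ hunif in
theorem existsDecomp : ∀ (n : ℕ) (g : Matrix (Fin n) (Fin n) F), g.det ≠ 0 →
    ∃ (w : Equiv.Perm (Fin n)) (r b : Matrix (Fin n) (Fin n) F),
      r ∈ Rw p F π n w ∧ IsBorel F b ∧ g = r * b := by
  intro n
  induction n with
  | zero =>
    intro g _
    refine ⟨1, 1, 1, fun i => i.elim0, ⟨fun i => i.elim0, fun i => i.elim0⟩, ?_⟩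
    ext i j; exact i.elim0
  | succ n ih =>
    intro g hg
    have hcol : ∃ i, g i 0 ≠ 0 := by
      by_contra h
      push_neg at h
      exact hg (Matrix.det_eq_zero_of_column_eq_zero 0 h)
    obtain ⟨i0, hi0, hO, hP⟩ := pivot hπ hunif (fun i => g i 0) hcol
    set u : F := g i0 0 with hu_def
    have hu : u ≠ 0 := hi0
    set c : Fin (n + 1) → F := fun i => g i 0 * u⁻¹ with hc_def
    have hc0 : c i0 = 1 := mul_inv_cancel₀ hu
    set A : Matrix (Fin (n + 1)) (Fin (n + 1)) F :=
      fun i j => Fin.cases (c i) (fun j' => g i j'.succ - c i * g i0 j'.succ) j with hA_def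
    have hA0 : ∀ i, A i 0 = c i := fun i => by simp only [hA_def, Fin.cases_zero]
    have hAs : ∀ (i : Fin (n+1)) (j' : Fin n), A i j'.succ = g i j'.succ - c i * g i0 j'.succ := fun i j' => by
      simp only [hA_def, Fin.cases_succ]
    -- the elementary column operation matrix T with A = g * T
    set T : Matrix (Fin (n + 1)) (Fin (n + 1)) F := fun i j =>
      Fin.cases (Fin.cases u⁻¹ (fun _ => 0) i)
        (fun j' => Fin.cases (-(g i0 j'.succ * u⁻¹)) (fun i' => if i' = j' then 1 else 0) i) j
      with hT_def
    have hT00 : T 0 0 = u⁻¹ := by simp only [hT_def, Fin.cases_zero]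
    have hTs0 : ∀ (i' : Fin n), T i'.succ 0 = 0 := fun i' => by
      simp only [hT_def, Fin.cases_zero, Fin.cases_succ]
    have hT0s : ∀ (j' : Fin n), T 0 j'.succ = -(g i0 j'.succ * u⁻¹) := fun j' => by
      simp only [hT_def, Fin.cases_zero, Fin.cases_succ]
    have hTss : ∀ (i' j' : Fin n), T i'.succ j'.succ = if i' = j' then 1 else 0 := fun i' j' => by
      simp only [hT_def, Fin.cases_succ]
    have hAgT : A = g * T := by
      ext i j
      rw [Matrix.mul_apply, Fin.sum_univ_succ]
      refine Fin.cases ?_ (fun j' => ?_) j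
      · rw [hA0, hT00]
        simp only [hTs0, mul_zero, Finset.sum_const_zero, add_zero]
        rfl
      · rw [hAs, hT0s]
        simp only [hTss, mul_ite, mul_one, mul_zero]
        rw [Finset.sum_ite_eq' Finset.univ j' (fun k' => g i k'.succ)]
        simp only [Finset.mem_univ, if_true]
        ring
    have hbtT : T.BlockTriangular id := by
      intro i j hij
      refine Fin.cases (fun hij => absurd hij (Fin.not_lt_zero _)) (fun i' hij => ?_) i hij
      refine Fin.cases (fun _ => hTs0 i') (fun j' hij => ?_) j hij
      rw [hTss, if_neg]
      intro h
      rw [h] at hij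
      exact lt_irrefl _ hij
    have hdetT : T.det = u⁻¹ := by
      rw [Matrix.det_of_upperTriangular hbtT, Fin.prod_univ_succ, hT00]
      simp [hTss]
    have hdetA : A.det ≠ 0 := by
      rw [hAgT, Matrix.det_mul, hdetT]
      exact mul_ne_zero hg (inv_ne_zero hu)
    have hArow0 : A i0 0 = 1 := by rw [hA0, hc0]
    have hArow : ∀ (j' : Fin n), A i0 j'.succ = 0 := fun j' => by rw [hAs, hc0, one_mul, sub_self]
    set At : Matrix (Fin n) (Fin n) F := A.submatrix i0.succAbove Fin.succ with hAt_def
    have hdetAt : At.det ≠ 0 := by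
      intro h0
      apply hdetA
      rw [Matrix.det_succ_row A i0, Fin.sum_univ_succ]
      simp only [hArow, mul_zero, zero_mul, Finset.sum_const_zero, add_zero, hArow0]
      rw [show (0 : Fin (n+1)).succAbove = Fin.succ from Fin.succAbove_zero]
      rw [← hAt_def, h0]
      simp
    obtain ⟨v, rt, bt, hrt, hbt, hAe⟩ := ih At hdetAt
    refine ⟨pasm i0 v, masm F i0 c rt, ?_, ?_, ?_, ?_⟩
    · exact fun i j => Fin.cases (Fin.cases u (fun _ => (0:F)) i)
        (fun j' => Fin.cases (g i0 j'.succ) (fun i' => bt i' j') i) j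
    · exact Rw_pasm hrt hc0 (fun i _ => hO i) (fun i hi => hP i hi)
    · constructor
      · intro i j hj
        refine Fin.cases (fun hj => absurd hj (Fin.not_lt_zero _)) (fun i' hj => ?_) i hj
        refine Fin.cases (fun _ => by simp) (fun j' hj => ?_) j hj
        simp only [Fin.cases_succ]
        exact hbt.1 i' j' (by rwa [Fin.succ_lt_succ_iff] at hj)
      · intro i
        refine Fin.cases ?_ (fun i' => ?_) i
        · simpa using hu
        · simpa using hbt.2 i'
    · ext i j
      erw [Matrix.mul_apply, Fin.sum_univ_succ]
      refine Fin.cases ?_ (fun j' => ?_) j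
      · simp only [Fin.cases_zero, masm_zero]
        simp only [Fin.cases_succ, Fin.cases_zero, mul_zero, Finset.sum_const_zero, add_zero]
        rw [hc_def]
        field_simp
      · simp only [Fin.cases_succ, Fin.cases_zero, masm_zero]
        by_cases hi : i = i0
        · subst hi
          simp only [masm_succ_self, zero_mul, Finset.sum_const_zero, add_zero, hc0, one_mul]
        · obtain ⟨k, rfl⟩ := Fin.exists_succAbove_eq hi
          simp only [masm_succ_sa]
          have hsum : ∑ k', rt k k' * bt k' j' = At k j' := by
            rw [hAe, Matrix.mul_apply]
          rw [hsum, hAt_def, Matrix.submatrix_apply, hAs]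
          ring
  end Exist

section Uniq
variable {p F} {π : F} (hπ : π ∈ oF p F)
  (hunif : ∀ x : F, x ≠ 0 → ∃ (m : ℤ) (u : F), u ∈ oF p F ∧ u⁻¹ ∈ oF p F ∧ x = u * π ^ m)

include hπ hunif in
theorem uniqDecomp : ∀ (n : ℕ) (w w' : Equiv.Perm (Fin n)) (r r' cB : Matrix (Fin n) (Fin n) F),
    r ∈ Rw p F π n w → r' ∈ Rw p F π n w' → IsBorel F cB → r' = r * cB →
    r' = r ∧ cB = 1 := by
  intro n
  induction n with
  | zero =>
    intro w w' r r' cB _ _ _ _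
    constructor <;> (ext i j; exact i.elim0)
  | succ n ih =>
    intro w w' r r' cB hr hr' hcB heq
    have hrw0 : r (w 0) 0 = 1 := (hr (w 0) 0).1 (Equiv.symm_apply_apply w 0)
    have hrw0' : r' (w' 0) 0 = 1 := (hr' (w' 0) 0).1 (Equiv.symm_apply_apply w' 0)
    have hpos : ∀ (σ : Equiv.Perm (Fin (n+1))) (i : Fin (n+1)), i ≠ σ 0 → 0 < σ⁻¹ i := by
      intro σ i hi
      rw [Fin.pos_iff_ne_zero]
      intro h0
      exact hi (by rw [← h0, Equiv.Perm.coe_inv, Equiv.apply_symm_apply])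
    have col0 : ∀ i, r' i 0 = r i 0 * cB 0 0 := by
      intro i
      have h := congrFun (congrFun heq i) 0
      rw [Matrix.mul_apply, Fin.sum_univ_succ] at h
      simp only [hcB.1 _ 0 (Fin.succ_pos _), mul_zero, Finset.sum_const_zero, add_zero] at h
      exact h
    have hlam : r' (w 0) 0 = cB 0 0 := by rw [col0, hrw0, one_mul]
    rcases lt_trichotomy (w' 0) (w 0) with hlt | heq0 | hgt
    · exfalso
      apply one_not_piO hπ hunif
      have hmem1 : r' (w 0) 0 ∈ piO p F π :=
        (hr' (w 0) 0).2.2.2 (hpos w' (w 0) (ne_of_gt hlt)) hlt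
      have hmem2 : r (w' 0) 0 ∈ oF p F :=
        (hr (w' 0) 0).2.2.1 (hpos w (w' 0) (ne_of_lt hlt)) hlt
      have h1 : (1 : F) = r (w' 0) 0 * cB 0 0 := by rw [← hrw0', col0]
      rw [h1, ← hlam]
      exact oF_mul_piO hmem2 hmem1
    · -- main case: w' 0 = w 0
      have hlam1 : cB 0 0 = 1 := by rw [← hlam, ← heq0, hrw0']
      have col0' : ∀ i, r' i 0 = r i 0 := fun i => by rw [col0, hlam1, mul_one]
      have hrz : ∀ (j' : Fin n), r (w 0) j'.succ = 0 := fun j' =>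
        (hr (w 0) j'.succ).2.1 (by rw [Equiv.Perm.coe_inv, Equiv.symm_apply_apply]; exact Fin.succ_pos _)
      have hrz' : ∀ (j' : Fin n), r' (w 0) j'.succ = 0 := fun j' =>
        (hr' (w 0) j'.succ).2.1 (by rw [← heq0, Equiv.Perm.coe_inv, Equiv.symm_apply_apply]; exact Fin.succ_pos _)
      have hcbrow : ∀ (j' : Fin n), cB 0 j'.succ = 0 := by
        intro j'
        have h := congrFun (congrFun heq (w 0)) j'.succ
        rw [Matrix.mul_apply, Fin.sum_univ_succ] at h
        simp only [hrz, zero_mul, Finset.sum_const_zero, add_zero, hrw0, one_mul, hrz'] at h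
        exact h.symm
      obtain ⟨v, hv⟩ := exists_pasm w
      obtain ⟨v', hv'⟩ := exists_pasm w'
      rw [heq0] at hv'
      have hrt : (Matrix.of (fun (k j : Fin n) => r ((w 0).succAbove k) j.succ)) ∈ Rw p F π n v :=
        Rw_restrict (by rw [← hv]; exact hr)
      have hrt' : (Matrix.of (fun (k j : Fin n) => r' ((w 0).succAbove k) j.succ)) ∈ Rw p F π n v' :=
        Rw_restrict (by rw [← hv']; exact hr')
      have hct : IsBorel F (Matrix.of (fun (k j : Fin n) => cB k.succ j.succ)) :=
        ⟨fun i j hij => hcB.1 i.succ j.succ (by rwa [Fin.succ_lt_succ_iff]),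
         fun i => hcB.2 i.succ⟩
      have hsub : (Matrix.of (fun (k j : Fin n) => r' ((w 0).succAbove k) j.succ)) =
          (Matrix.of (fun (k j : Fin n) => r ((w 0).succAbove k) j.succ)) *
          (Matrix.of (fun (k j : Fin n) => cB k.succ j.succ)) := by
        ext k j
        have h := congrFun (congrFun heq ((w 0).succAbove k)) j.succ
        rw [Matrix.mul_apply, Fin.sum_univ_succ] at h
        simp only [hcbrow, mul_zero, zero_add] at h
        rw [Matrix.mul_apply]
        exact h
      obtain ⟨hrr, hcc⟩ := ih v v' _ _ _ hrt hrt' hct hsub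
      constructor
      · ext i j
        refine Fin.cases (col0' i) (fun j' => ?_) j
        by_cases hi : i = w 0
        · subst hi; rw [hrz, hrz']
        · obtain ⟨k, rfl⟩ := Fin.exists_succAbove_eq hi
          exact congrFun (congrFun hrr k) j'
      · ext i j
        refine Fin.cases ?_ (fun i' => ?_) i
        · refine Fin.cases ?_ (fun j' => ?_) j
          · rw [hlam1, Matrix.one_apply_eq]
          · rw [hcbrow, Matrix.one_apply_ne (Fin.succ_ne_zero j').symm]
        · refine Fin.cases ?_ (fun j' => ?_) j
          · rw [hcB.1 i'.succ 0 (Fin.succ_pos _), Matrix.one_apply_ne (Fin.succ_ne_zero i')]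
          · have := congrFun (congrFun hcc i') j'
            simp only [Matrix.one_apply, Fin.succ_inj] at this ⊢
            exact this
    · exfalso
      apply one_not_piO hπ hunif
      have hmem1 : r' (w 0) 0 ∈ oF p F :=
        (hr' (w 0) 0).2.2.1 (hpos w' (w 0) (ne_of_lt hgt)) hgt
      have hmem2 : r (w' 0) 0 ∈ piO p F π :=
        (hr (w' 0) 0).2.2.2 (hpos w (w' 0) (ne_of_gt hgt)) hgt
      have h1 : (1 : F) = r (w' 0) 0 * cB 0 0 := by rw [← hrw0', col0]
      rw [h1, ← hlam]
      exact piO_mul_oF hmem2 hmem1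
end Uniq

/-- every element of `GL_n(F)` can be written uniquely in the form
`r · b` with `r ∈ R = ⋃_w R_w` and `b ∈ B`. -/
theorem stmt10 (n : ℕ) (π : F) (hπ : π ∈ oF p F)
    (hunif : ∀ x : F, x ≠ 0 →
      ∃ (m : ℤ) (u : F), u ∈ oF p F ∧ u⁻¹ ∈ oF p F ∧ x = u * π ^ m)
    (g : GL (Fin n) F) :
    ∃ (w : Equiv.Perm (Fin n)) (r b : Matrix (Fin n) (Fin n) F),
      r ∈ Rw p F π n w ∧ IsBorel F b ∧ (↑g : Matrix (Fin n) (Fin n) F) = r * b ∧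
      ∀ (w' : Equiv.Perm (Fin n)) (r' b' : Matrix (Fin n) (Fin n) F),
        r' ∈ Rw p F π n w' → IsBorel F b' →
        (↑g : Matrix (Fin n) (Fin n) F) = r' * b' → r' = r ∧ b' = b := by
  have hdet : (↑g : Matrix (Fin n) (Fin n) F).det ≠ 0 :=
    isUnit_iff_ne_zero.mp ((Matrix.isUnit_iff_isUnit_det _).mp ⟨g, rfl⟩)
  obtain ⟨w, r, b, hrw, hbb, hgrb⟩ := existsDecomp hπ hunif n (↑g) hdet
  refine ⟨w, r, b, hrw, hbb, hgrb, ?_⟩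
  intro w' r' b' hr' hb' hg'
  have hbd' : IsUnit b'.det := isUnit_iff_ne_zero.mpr (isBorel_det_ne_zero hb')
  have hcB : IsBorel F (b * b'⁻¹) := isBorel_mul hbb (isBorel_inv hb')
  have hre : r' = r * (b * b'⁻¹) := by
    have h1 : r' * b' = r * b := by rw [← hg', ← hgrb]
    calc r' = r' * b' * b'⁻¹ := by rw [Matrix.mul_nonsing_inv_cancel_right _ _ hbd']
    _ = r * b * b'⁻¹ := by rw [h1]
    _ = r * (b * b'⁻¹) := by rw [Matrix.mul_assoc]
  obtain ⟨hreq, hceq⟩ := uniqDecomp hπ hunif n w w' r r' (b * b'⁻¹) hrw hr' hcB hre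
  refine ⟨hreq, ?_⟩
  have hbb' : b = b' := by
    calc b = b * (b'⁻¹ * b') := by rw [Matrix.nonsing_inv_mul _ hbd', mul_one]
    _ = (b * b'⁻¹) * b' := by rw [Matrix.mul_assoc]
    _ = b' := by rw [hceq, one_mul]
  exact hbb'.symm
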